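/- Let n = l_1 + l_2 + ⋯ + l_K with positive integers l_1,…,l_K, and let κ̄_1 > κ̄_2 > ⋯ > κ̄_K be integers. Partition n×n complex matrices into blocks of sizes l_i × l_j accordingly. Let V : ℂ → M_n(ℂ) be entire (every entry is an entire function) with V(z) invertible for every z ∈ ℂ, and suppose there are constants C > 0 and R > 0 such that for all |z| ≥ R and all block indices i, j: ‖V_{ij}(z)‖ ≤ C·|z|^{κ̄_i − κ̄_j}. Then: (1) V_{ij}(z) = 0 identically whenever i > j; (2) for i ≤ j, every entry of V_{ij} is a polynomial in z of degree at most κ̄_i − κ̄_j; and (3) the diagonal blocks V_{ii} are constant invertible l_i × l_i matrices. -/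

import Mathlib

open Polynomial Metric Set

/-- An entire function bounded outside a ball is bounded everywhere. -/
lemma aux_bounded (f : ℂ → ℂ) (hf : Differentiable ℂ f) (C R : ℝ)
    (h : ∀ z, R ≤ ‖z‖ → ‖f z‖ ≤ C) :
    ∃ M, ∀ z, ‖f z‖ ≤ M := by
  obtain ⟨M, hM⟩ := (isCompact_closedBall (0:ℂ) R).exists_bound_of_continuousOn
    hf.continuous.continuousOn
  refine ⟨max M C, fun z => ?_⟩
  rcases le_or_gt (‖z‖) R with hz | hz
  · exact le_trans (hM z (by simpa using hz)) (le_max_left _ _)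
  · exact le_trans (h z hz.le) (le_max_right _ _)

/-- Bounded entire functions are constant (Liouville). -/
lemma aux_const (f : ℂ → ℂ) (hf : Differentiable ℂ f) (C R : ℝ)
    (h : ∀ z, R ≤ ‖z‖ → ‖f z‖ ≤ C) :
    ∀ z, f z = f 0 := by
  obtain ⟨M, hM⟩ := aux_bounded f hf C R h
  intro z
  exact hf.apply_eq_apply_of_bounded
    (isBounded_iff_forall_norm_le.mpr ⟨M, by rintro x ⟨w, rfl⟩; exact hM w⟩) z 0

/-- Entire function with polynomial growth is a polynomial. -/
lemma aux_poly (d : ℕ) : ∀ (f : ℂ → ℂ), Differentiable ℂ f → ∀ (C R : ℝ), 0 < R →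
    (∀ z, R ≤ ‖z‖ → ‖f z‖ ≤ C * ‖z‖ ^ d) →
    ∃ P : Polynomial ℂ, P.natDegree ≤ d ∧ ∀ z, f z = P.eval z := by
  induction d with
  | zero =>
    intro f hf C R hR h
    refine ⟨Polynomial.C (f 0), by simp, fun z => ?_⟩
    simp [aux_const f hf C R (by simpa using h) z]
  | succ d ih =>
    intro f hf C R hR h
    set g : ℂ → ℂ := dslope f 0 with hg
    have hgd : Differentiable ℂ g := by
      rw [← differentiableOn_univ] at hf ⊢
      exact (Complex.differentiableOn_dslope Filter.univ_mem).mpr hf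
    have hgb : ∀ z, max R 1 ≤ ‖z‖ →
        ‖g z‖ ≤ (C + ‖f 0‖) * ‖z‖ ^ d := by
      intro z hz
      have hz1 : (1:ℝ) ≤ ‖z‖ := le_trans (le_max_right _ _) hz
      have hzR : R ≤ ‖z‖ := le_trans (le_max_left _ _) hz
      have hz0 : z ≠ 0 := by
        intro h0; rw [h0] at hz1; simp at hz1; linarith
      have : g z = (f z - f 0) / z := by
        rw [hg, dslope_of_ne _ hz0, slope_def_field]; ring
      rw [this, norm_div]
      rw [div_le_iff₀ (by positivity)]
      calc ‖f z - f 0‖ ≤ ‖f z‖ + ‖f 0‖ := by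
            exact norm_sub_le _ _
        _ ≤ C * ‖z‖ ^ (d+1) + ‖f 0‖ := by
            linarith [h z hzR]
        _ ≤ (C + ‖f 0‖) * ‖z‖ ^ d * ‖z‖ := by
            have h1 : ‖z‖ ^ (d+1) = ‖z‖ ^ d * ‖z‖ := by ring
            have h2 : (1:ℝ) ≤ ‖z‖ ^ d * ‖z‖ := by
              calc (1:ℝ) = 1 ^ d * 1 := by ring
                _ ≤ ‖z‖ ^ d * ‖z‖ :=
                    mul_le_mul (pow_le_pow_left₀ zero_le_one hz1 d) hz1 zero_le_one
                      (by positivity)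
            rw [h1]
            nlinarith [norm_nonneg (f 0), h2, norm_nonneg (f z)]
    obtain ⟨Q, hQd, hQ⟩ := ih g hgd (C + ‖f 0‖) (max R 1)
      (lt_of_lt_of_le one_pos (le_max_right _ _)) hgb
    refine ⟨Polynomial.C (f 0) + Polynomial.X * Q, ?_, fun z => ?_⟩
    · refine le_trans (natDegree_add_le _ _) ?_
      simp only [natDegree_C, max_le_iff]
      refine ⟨Nat.zero_le _, le_trans natDegree_mul_le ?_⟩
      simp only [natDegree_X]
      omega
    · have : f z = f 0 + z * g z := by
        rcases eq_or_ne z 0 with rfl | hz0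
        · simp
        · rw [hg, dslope_of_ne _ hz0, slope_def_field]; field_simp; ring
      simp [this, hQ z]

/-- Equivalence between `Fin (l i)` and the fiber of `Sigma.fst` over `i`. -/
def stmt13BlockEquiv {K : ℕ} (l : Fin K → ℕ) (i : Fin K) :
    Fin (l i) ≃ {a : (j : Fin K) × Fin (l j) // a.1 = i} where
  toFun s := ⟨⟨i, s⟩, rfl⟩
  invFun a := a.2 ▸ a.1.2
  left_inv s := rfl
  right_inv a := by rcases a with ⟨⟨j, s⟩, h⟩; subst h; rfl

theorem stmt13' (K : ℕ) (hK : 1 ≤ K) (l : Fin K → ℕ) (hl : ∀ i, 0 < l i)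
    (κ : Fin K → ℤ) (hκ : ∀ i j : Fin K, i < j → κ j < κ i)
    (V : ℂ → Matrix ((i : Fin K) × Fin (l i)) ((i : Fin K) × Fin (l i)) ℂ)
    (hVa : ∀ r s, Differentiable ℂ (fun z => V z r s))
    (hVu : ∀ z, IsUnit (V z))
    (C R : ℝ) (hC : 0 < C) (hR : 0 < R)
    (hbound : ∀ z : ℂ, R ≤ ‖z‖ →
      ∀ (i j : Fin K) (s : Fin (l i)) (t : Fin (l j)),
        ‖V z ⟨i, s⟩ ⟨j, t⟩‖ ≤ C * ‖z‖ ^ (κ i - κ j)) :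
    (∀ (i j : Fin K), j < i →
      ∀ (s : Fin (l i)) (t : Fin (l j)) (z : ℂ), V z ⟨i, s⟩ ⟨j, t⟩ = 0) ∧
    (∀ (i j : Fin K), i ≤ j → ∀ (s : Fin (l i)) (t : Fin (l j)),
      ∃ P : Polynomial ℂ, (P.natDegree : ℤ) ≤ κ i - κ j ∧
        ∀ z : ℂ, V z ⟨i, s⟩ ⟨j, t⟩ = P.eval z) ∧
    (∀ i : Fin K, ∃ B : Matrix (Fin (l i)) (Fin (l i)) ℂ, IsUnit B ∧
      ∀ (z : ℂ) (s t : Fin (l i)), V z ⟨i, s⟩ ⟨i, t⟩ = B s t) := by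
  -- Part 1: below-diagonal blocks vanish.
  have part1 : ∀ (i j : Fin K), j < i →
      ∀ (s : Fin (l i)) (t : Fin (l j)) (z : ℂ), V z ⟨i, s⟩ ⟨j, t⟩ = 0 := by
    intro i j hji s t
    set f : ℂ → ℂ := fun z => V z ⟨i, s⟩ ⟨j, t⟩ with hf
    have he : κ i - κ j ≤ -1 := by have := hκ j i hji; omega
    have hb : ∀ z, max R 1 ≤ ‖z‖ → ‖f z‖ ≤ C := by
      intro z hz
      have hz1 : (1:ℝ) ≤ ‖z‖ := le_trans (le_max_right _ _) hz
      have hzR : R ≤ ‖z‖ := le_trans (le_max_left _ _) hz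
      calc ‖f z‖ ≤ C * ‖z‖ ^ (κ i - κ j) := hbound z hzR i j s t
        _ ≤ C * ‖z‖ ^ (0:ℤ) :=
            mul_le_mul_of_nonneg_left
              (zpow_le_zpow_right₀ hz1 (by omega)) hC.le
        _ = C := by simp
    have hconst := aux_const f (hVa _ _) C (max R 1) hb
    have h0 : ‖f 0‖ = 0 := by
      have hle : ∀ x : ℝ, max R 1 ≤ x → ‖f 0‖ ≤ C / x := by
        intro x hx
        have hx1 : (1:ℝ) ≤ x := le_trans (le_max_right _ _) hx
        have hxa : ‖(x:ℂ)‖ = x := by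
          rw [Complex.norm_real, Real.norm_eq_abs, abs_of_nonneg (by linarith)]
        have hzR : R ≤ ‖(x:ℂ)‖ := by rw [hxa]; exact le_trans (le_max_left _ _) hx
        calc ‖f 0‖ = ‖f x‖ := by rw [hconst x]
          _ ≤ C * ‖(x:ℂ)‖ ^ (κ i - κ j) := hbound x hzR i j s t
          _ ≤ C * x ^ (-1:ℤ) := by
              rw [hxa]
              exact mul_le_mul_of_nonneg_left (zpow_le_zpow_right₀ hx1 he) hC.le
          _ = C / x := by rw [zpow_neg_one]; ring
      have htend : Filter.Tendsto (fun x : ℝ => C / x) Filter.atTop (nhds 0) :=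
        Filter.Tendsto.div_atTop tendsto_const_nhds Filter.tendsto_id
      have := ge_of_tendsto htend (Filter.eventually_atTop.mpr ⟨max R 1, hle⟩)
      exact le_antisymm this (norm_nonneg _)
    intro z
    show f z = 0
    rw [hconst z]
    exact norm_eq_zero.mp h0
  -- Part 2: blocks are polynomial.
  have part2 : ∀ (i j : Fin K), i ≤ j → ∀ (s : Fin (l i)) (t : Fin (l j)),
      ∃ P : Polynomial ℂ, (P.natDegree : ℤ) ≤ κ i - κ j ∧
        ∀ z : ℂ, V z ⟨i, s⟩ ⟨j, t⟩ = P.eval z := by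
    intro i j hij s t
    have hd : 0 ≤ κ i - κ j := by
      rcases lt_or_eq_of_le hij with h | h
      · have := hκ i j h; omega
      · rw [h]; omega
    obtain ⟨P, hPd, hP⟩ := aux_poly (κ i - κ j).toNat (fun z => V z ⟨i, s⟩ ⟨j, t⟩)
      (hVa _ _) C R hR (by
        intro z hz
        have := hbound z hz i j s t
        rwa [← Int.toNat_of_nonneg hd, zpow_natCast] at this)
    refine ⟨P, ?_, hP⟩
    omega
  refine ⟨part1, part2, ?_⟩
  -- Part 3: diagonal blocks constant and invertible.
  intro i
  have hconst : ∀ (s t : Fin (l i)) (z : ℂ), V z ⟨i, s⟩ ⟨i, t⟩ = V 0 ⟨i, s⟩ ⟨i, t⟩ := by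
    intro s t z
    apply aux_const _ (hVa _ _) C R
    intro w hw
    have := hbound w hw i i s t
    simpa using this
  refine ⟨fun s t => V 0 ⟨i, s⟩ ⟨i, t⟩, ?_, fun z s t => hconst s t z⟩
  -- invertibility via block-triangular determinant
  have hBT : Matrix.BlockTriangular (V 0) Sigma.fst := by
    rintro ⟨a, s⟩ ⟨b, t⟩ h
    exact part1 a b h s t 0
  have hdet : (V 0).det = ∏ a ∈ Finset.univ.image Sigma.fst,
      ((V 0).toSquareBlock Sigma.fst a).det := hBT.det
  have hdet0 : (V 0).det ≠ 0 := by
    have := (hVu 0).map (Matrix.detMonoidHom)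
    simpa [isUnit_iff_ne_zero] using this
  have himem : i ∈ Finset.univ.image (Sigma.fst (β := fun j => Fin (l j))) :=
    Finset.mem_image.mpr ⟨⟨i, ⟨0, hl i⟩⟩, Finset.mem_univ _, rfl⟩
  have hblock : ((V 0).toSquareBlock Sigma.fst i).det ≠ 0 := by
    rw [hdet] at hdet0
    exact Finset.prod_ne_zero_iff.mp hdet0 i himem
  set e := stmt13BlockEquiv l i with he
  have heq : (V 0).toSquareBlock Sigma.fst i =
      (Matrix.of fun s t => V 0 ⟨i, s⟩ ⟨i, t⟩).submatrix e.symm e.symm := by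
    ext a b
    have ha : (⟨i, e.symm a⟩ : (j : Fin K) × Fin (l j)) = a.1 :=
      congrArg Subtype.val (e.apply_symm_apply a)
    have hb2 : (⟨i, e.symm b⟩ : (j : Fin K) × Fin (l j)) = b.1 :=
      congrArg Subtype.val (e.apply_symm_apply b)
    simp only [Matrix.toSquareBlock_def, Matrix.submatrix_apply, Matrix.of_apply]
    rw [ha, hb2]
  rw [show (fun s t => V 0 ⟨i, s⟩ ⟨i, t⟩) = Matrix.of fun s t => V 0 ⟨i, s⟩ ⟨i, t⟩ from rfl,
    Matrix.isUnit_iff_isUnit_det, isUnit_iff_ne_zero]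
  intro hdB
  apply hblock
  rw [heq, Matrix.det_submatrix_equiv_self]
  exact hdB


/-- (Liouville-type argument from Theorem 3.5 of the paper.)
An entire, everywhere invertible block matrix function `V(z)` whose `(i,j)`
block grows at most like `|z|^{κ̄_i − κ̄_j}` (with `κ̄_1 > ⋯ > κ̄_K`) is block
upper triangular with polynomial blocks of degree at most `κ̄_i − κ̄_j` and
constant invertible diagonal blocks.  Rows and columns are indexed by the
sigma type `Σ i, Fin (l i)` encoding the partition `n = l_1 + ⋯ + l_K`. -/
theorem stmt13 (K : ℕ) (hK : 1 ≤ K) (l : Fin K → ℕ) (hl : ∀ i, 0 < l i)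
    (κ : Fin K → ℤ) (hκ : ∀ i j : Fin K, i < j → κ j < κ i)
    (V : ℂ → Matrix ((i : Fin K) × Fin (l i)) ((i : Fin K) × Fin (l i)) ℂ)
    (hVa : ∀ r s, Differentiable ℂ (fun z => V z r s))
    (hVu : ∀ z, IsUnit (V z))
    (C R : ℝ) (hC : 0 < C) (hR : 0 < R)
    (hbound : ∀ z : ℂ, R ≤ ‖z‖ →
      ∀ (i j : Fin K) (s : Fin (l i)) (t : Fin (l j)),
        ‖V z ⟨i, s⟩ ⟨j, t⟩‖ ≤ C * ‖z‖ ^ (κ i - κ j)) :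
    (∀ (i j : Fin K), j < i →
      ∀ (s : Fin (l i)) (t : Fin (l j)) (z : ℂ), V z ⟨i, s⟩ ⟨j, t⟩ = 0) ∧
    (∀ (i j : Fin K), i ≤ j → ∀ (s : Fin (l i)) (t : Fin (l j)),
      ∃ P : Polynomial ℂ, (P.natDegree : ℤ) ≤ κ i - κ j ∧
        ∀ z : ℂ, V z ⟨i, s⟩ ⟨j, t⟩ = P.eval z) ∧
    (∀ i : Fin K, ∃ B : Matrix (Fin (l i)) (Fin (l i)) ℂ, IsUnit B ∧
      ∀ (z : ℂ) (s t : Fin (l i)), V z ⟨i, s⟩ ⟨i, t⟩ = B s t) := by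
  exact stmt13' K hK l hl κ hκ V hVa hVu C R hC hR hbound
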